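/- For a satisfaction coefficient k_e > 0 the following are equivalent: (i) for every price p with c_e ≤ p ≤ r_e one has 0 < (1/X)·(k_e/p − 1/b_e) < 1; (ii) r_e·X/(e−1) < k_e < c_e·X·e/(e−1). (In particular such a k_e can exist only when r_e < e·c_e.) -/

import Mathlib

lemma stmt3_aux (X E ke p : ℝ) (hX : 0 < X) (hE : 0 < E) (hp : 0 < p) :
    (0 < (1 / X) * (ke / p - 1 / (E / X)) ∧
      (1 / X) * (ke / p - 1 / (E / X)) < 1) ↔
    (p * X < ke * E ∧ ke * E < p * X * (E + 1)) := by
  rw [show (1 / X) * (ke / p - 1 / (E / X)) = (ke * E - p * X) / (X * E * p) by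
    rw [eq_div_iff (by positivity)]; field_simp]
  rw [lt_div_iff₀ (by positivity), div_lt_one (by positivity)]
  constructor
  · rintro ⟨h1, h2⟩; constructor <;> nlinarith
  · rintro ⟨h1, h2⟩; constructor <;> nlinarith

/-- For a satisfaction coefficient `k_e > 0`, the interior-response condition
holds for every admissible price iff `r_e·X/(e−1) < k_e < c_e·X·e/(e−1)`
(with `b_e = (e−1)/X`). -/
theorem stmt_3 (X ce re ke : ℝ)
    (hX : 0 < X) (hce : 0 < ce) (hcr : ce ≤ re) (hke : 0 < ke) :
    (∀ p : ℝ, ce ≤ p → p ≤ re →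
        0 < (1 / X) * (ke / p - 1 / ((Real.exp 1 - 1) / X)) ∧
        (1 / X) * (ke / p - 1 / ((Real.exp 1 - 1) / X)) < 1) ↔
      (re * X / (Real.exp 1 - 1) < ke ∧
        ke < ce * X * Real.exp 1 / (Real.exp 1 - 1)) := by
  have he : (1 : ℝ) < Real.exp 1 := by
    have := Real.exp_one_gt_d9; linarith
  set E := Real.exp 1 - 1 with hEdef
  have hE : 0 < E := by simp only [hEdef]; linarith
  have hre : 0 < re := lt_of_lt_of_le hce hcr
  have hEe : E + 1 = Real.exp 1 := by simp [hEdef]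
  constructor
  · intro h
    have h1 := (stmt3_aux X E ke re hX hE hre).mp (h re hcr le_rfl)
    have h2 := (stmt3_aux X E ke ce hX hE hce).mp (h ce le_rfl hcr)
    constructor
    · rw [div_lt_iff₀ hE]; linarith [h1.1]
    · rw [lt_div_iff₀ hE]
      have := h2.2
      rw [hEe] at this
      exact this
  · rintro ⟨h1, h2⟩ p hcp hpr
    have hp : 0 < p := lt_of_lt_of_le hce hcp
    rw [div_lt_iff₀ hE] at h1
    rw [lt_div_iff₀ hE] at h2
    rw [stmt3_aux X E ke p hX hE hp]
    have k1 : p * X ≤ re * X := mul_le_mul_of_nonneg_right hpr hX.le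
    have k2 : ce * X * Real.exp 1 ≤ p * X * Real.exp 1 :=
      mul_le_mul_of_nonneg_right (mul_le_mul_of_nonneg_right hcp hX.le) (Real.exp_pos 1).le
    constructor
    · linarith
    · rw [hEe]; linarith
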